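/- TV coverage guarantee: Let P and P̂ be two transition kernels on the same finite MDP (reward r with 0 ≤ r ≤ R_max, discount γ ∈ (0,1), initial distribution ρ₀), let Π be a nonempty set of stationary policies, and suppose a probability mass function d_data on S × A satisfies κ-coverage for Π under P. Then for every π ∈ Π, |V_π(P) − V_π(P̂)| ≤ (γ·R_max/(1−γ)) · κ · Σ_{(s,a)} d_data(s,a)·TV(P(·|s,a), P̂(·|s,a)). -/

import Mathlib

open Finset Real

/-- `p` is a probability mass function on a finite type. -/
def IsPMF {X : Type*} [Fintype X] (p : X → ℝ) : Prop :=
  (∀ x, 0 ≤ p x) ∧ ∑ x, p x = 1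

/-- `P` is a transition kernel: each `P s a` is a pmf on states. -/
def IsKernel {S A : Type*} [Fintype S] [Fintype A] (P : S → A → S → ℝ) : Prop :=
  ∀ s a, IsPMF (P s a)

/-- `pol` is a stationary policy: each `pol s` is a pmf on actions. -/
def IsPolicy {S A : Type*} [Fintype S] [Fintype A] (pol : S → A → ℝ) : Prop :=
  ∀ s, IsPMF (pol s)

/-- `V` satisfies the Bellman evaluation equation for policy `pol` under kernel `P`,
reward `r` and discount `γ`. -/
def IsValue {S A : Type*} [Fintype S] [Fintype A] (P : S → A → S → ℝ) (pol : S → A → ℝ)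
    (r : S → A → ℝ) (γ : ℝ) (V : S → ℝ) : Prop :=
  ∀ s, V s = ∑ a, pol s a * (r s a + γ * ∑ s', P s a s' * V s')

/-- `d` is the (unnormalized) discounted state-action occupancy of `pol` under kernel `P`
with initial distribution `ρ₀` and discount `γ`. -/
def IsOcc {S A : Type*} [Fintype S] [Fintype A] (P : S → A → S → ℝ) (pol : S → A → ℝ)
    (ρ₀ : S → ℝ) (γ : ℝ) (d : S → A → ℝ) : Prop :=
  ∀ s a, d s a = pol s a * (ρ₀ s + γ * ∑ x : S × A, d x.1 x.2 * P x.1 x.2 s)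

/-- ℓ₁ distance between two pmfs on a finite type. -/
noncomputable def l1Dist {X : Type*} [Fintype X] (p q : X → ℝ) : ℝ :=
  ∑ x, |p x - q x|

/-- Total variation distance between two pmfs on a finite type. -/
noncomputable def tvDist {X : Type*} [Fintype X] (p q : X → ℝ) : ℝ :=
  (1 / 2) * ∑ x, |p x - q x|

/-- Kullback-Leibler divergence between two pmfs on a finite type (finite under
absolute continuity). -/
noncomputable def klF {X : Type*} [Fintype X] (p q : X → ℝ) : ℝ :=
  ∑ x, p x * Real.log (p x / q x)

/-- `d_data` satisfies κ-coverage for the policy set `Pol` under kernel `P`: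
every occupancy of a policy in `Pol` is dominated by `κ · d_data`. -/
def KappaCoverage {S A : Type*} [Fintype S] [Fintype A] (P : S → A → S → ℝ) (ρ₀ : S → ℝ)
    (γ : ℝ) (Pol : Set (S → A → ℝ)) (ddata : S → A → ℝ) (κ : ℝ) : Prop :=
  ∀ pol ∈ Pol, ∀ dpol : S → A → ℝ, IsOcc P pol ρ₀ γ dpol → ∀ s a, dpol s a ≤ κ * ddata s a

/-- Critic discrepancy `Δ_{D,P̂}(s,a)`. -/
noncomputable def critDelta {S A : Type*} [Fintype S] (P Phat : S → A → S → ℝ)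
    (D : S → A → S → ℝ) (s : S) (a : A) : ℝ :=
  (∑ s', P s a s' * D s a s') - ∑ s', Phat s a s' * D s a s'

/-- Supremum over the critic class of the critic discrepancy at `(s,a)`. -/
noncomputable def critSup {S A : Type*} [Fintype S] (𝒟 : Set (S → A → S → ℝ))
    (P Phat : S → A → S → ℝ) (s : S) (a : A) : ℝ :=
  sSup {y | ∃ D ∈ 𝒟, y = critDelta P Phat D s a}

section AuxOcc

variable {S A : Type*} [Fintype S] [Fintype A]

/-- Time-`t` (discount-free) state-action distribution of `pol` under `P`. -/
noncomputable def occSeq (P : S → A → S → ℝ) (pol : S → A → ℝ) (ρ₀ : S → ℝ) :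
    ℕ → S → A → ℝ
  | 0 => fun s a => pol s a * ρ₀ s
  | t + 1 => fun s a => pol s a * ∑ x : S × A, occSeq P pol ρ₀ t x.1 x.2 * P x.1 x.2 s

lemma occSeq_nonneg (P : S → A → S → ℝ) (pol : S → A → ℝ) (ρ₀ : S → ℝ)
    (hP : IsKernel P) (hpol : IsPolicy pol) (hρ : IsPMF ρ₀) :
    ∀ t s a, 0 ≤ occSeq P pol ρ₀ t s a := by
  intro t
  induction t with
  | zero => exact fun s a => mul_nonneg ((hpol s).1 a) (hρ.1 s)
  | succ t ih =>
      exact fun s a => mul_nonneg ((hpol s).1 a) (Finset.sum_nonneg fun x _ =>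
        mul_nonneg (ih x.1 x.2) ((hP x.1 x.2).1 s))

lemma occSeq_mass (P : S → A → S → ℝ) (pol : S → A → ℝ) (ρ₀ : S → ℝ)
    (hP : IsKernel P) (hpol : IsPolicy pol) (hρ : IsPMF ρ₀) :
    ∀ t, ∑ x : S × A, occSeq P pol ρ₀ t x.1 x.2 = 1 := by
  intro t
  induction t with
  | zero =>
      rw [Fintype.sum_prod_type]
      simp only [occSeq]
      calc ∑ s, ∑ a, pol s a * ρ₀ s = ∑ s : S, ρ₀ s := by
            refine Finset.sum_congr rfl fun s _ => ?_
            rw [← Finset.sum_mul, (hpol s).2, one_mul]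
        _ = 1 := hρ.2
  | succ t ih =>
      rw [Fintype.sum_prod_type]
      simp only [occSeq]
      calc ∑ s, ∑ a, pol s a * ∑ x : S × A, occSeq P pol ρ₀ t x.1 x.2 * P x.1 x.2 s
          = ∑ s, ∑ x : S × A, occSeq P pol ρ₀ t x.1 x.2 * P x.1 x.2 s := by
            refine Finset.sum_congr rfl fun s _ => ?_
            rw [← Finset.sum_mul, (hpol s).2, one_mul]
        _ = ∑ x : S × A, ∑ s, occSeq P pol ρ₀ t x.1 x.2 * P x.1 x.2 s := Finset.sum_comm
        _ = ∑ x : S × A, occSeq P pol ρ₀ t x.1 x.2 := by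
            refine Finset.sum_congr rfl fun x _ => ?_
            rw [← Finset.mul_sum, (hP x.1 x.2).2, mul_one]
        _ = 1 := ih

lemma occSeq_le_one (P : S → A → S → ℝ) (pol : S → A → ℝ) (ρ₀ : S → ℝ)
    (hP : IsKernel P) (hpol : IsPolicy pol) (hρ : IsPMF ρ₀) (t : ℕ) (s : S) (a : A) :
    occSeq P pol ρ₀ t s a ≤ 1 := by
  have h := occSeq_mass P pol ρ₀ hP hpol hρ t
  calc occSeq P pol ρ₀ t s a
      ≤ ∑ x : S × A, occSeq P pol ρ₀ t x.1 x.2 :=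
        Finset.single_le_sum (f := fun x : S × A => occSeq P pol ρ₀ t x.1 x.2)
          (fun x _ => occSeq_nonneg P pol ρ₀ hP hpol hρ t x.1 x.2)
          (Finset.mem_univ (s, a))
    _ = 1 := h

lemma occ_summable (P : S → A → S → ℝ) (pol : S → A → ℝ) (ρ₀ : S → ℝ) {γ : ℝ}
    (hP : IsKernel P) (hpol : IsPolicy pol) (hρ : IsPMF ρ₀)
    (hγ0 : 0 ≤ γ) (hγ1 : γ < 1) (s : S) (a : A) :
    Summable (fun t => γ ^ t * occSeq P pol ρ₀ t s a) := by
  refine Summable.of_nonneg_of_le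
    (fun t => mul_nonneg (pow_nonneg hγ0 t) (occSeq_nonneg P pol ρ₀ hP hpol hρ t s a))
    (fun t => ?_) (summable_geometric_of_lt_one hγ0 hγ1)
  exact mul_le_of_le_one_right (pow_nonneg hγ0 t) (occSeq_le_one P pol ρ₀ hP hpol hρ t s a)

lemma exists_occ (P : S → A → S → ℝ) (pol : S → A → ℝ) (ρ₀ : S → ℝ) {γ : ℝ}
    (hP : IsKernel P) (hpol : IsPolicy pol) (hρ : IsPMF ρ₀)
    (hγ0 : 0 ≤ γ) (hγ1 : γ < 1) :
    ∃ d : S → A → ℝ, IsOcc P pol ρ₀ γ d ∧ ∀ s a, 0 ≤ d s a := by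
  set d : S → A → ℝ := fun s a => ∑' t, γ ^ t * occSeq P pol ρ₀ t s a with hddef
  have hsum : ∀ s a, Summable (fun t => γ ^ t * occSeq P pol ρ₀ t s a) :=
    fun s a => occ_summable P pol ρ₀ hP hpol hρ hγ0 hγ1 s a
  refine ⟨d, ?_, fun s a => tsum_nonneg fun t =>
    mul_nonneg (pow_nonneg hγ0 t) (occSeq_nonneg P pol ρ₀ hP hpol hρ t s a)⟩
  intro s a
  have h0 : d s a = γ ^ 0 * occSeq P pol ρ₀ 0 s a
      + ∑' t, γ ^ (t + 1) * occSeq P pol ρ₀ (t + 1) s a := Summable.tsum_eq_zero_add (hsum s a)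
  have h1 : ∑' t, γ ^ (t + 1) * occSeq P pol ρ₀ (t + 1) s a
      = ∑' t, ∑ x : S × A, pol s a * γ *
        ((γ ^ t * occSeq P pol ρ₀ t x.1 x.2) * P x.1 x.2 s) := by
    refine tsum_congr fun t => ?_
    simp only [occSeq]
    rw [Finset.mul_sum, Finset.mul_sum]
    exact Finset.sum_congr rfl fun x _ => by ring
  have h2 : ∑' t, ∑ x : S × A, pol s a * γ *
        ((γ ^ t * occSeq P pol ρ₀ t x.1 x.2) * P x.1 x.2 s)
      = ∑ x : S × A, ∑' t, pol s a * γ *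
        ((γ ^ t * occSeq P pol ρ₀ t x.1 x.2) * P x.1 x.2 s) :=
    Summable.tsum_finsetSum fun x _ => (((hsum x.1 x.2).mul_right _).mul_left _)
  have h3 : ∀ x : S × A, ∑' t, pol s a * γ *
        ((γ ^ t * occSeq P pol ρ₀ t x.1 x.2) * P x.1 x.2 s)
      = pol s a * γ * (d x.1 x.2 * P x.1 x.2 s) := by
    intro x
    rw [tsum_mul_left, tsum_mul_right]
  rw [h0, h1, h2]
  rw [Finset.sum_congr rfl fun x _ => h3 x]
  simp only [occSeq, pow_zero, one_mul]
  rw [show ∑ x : S × A, pol s a * γ * (d x.1 x.2 * P x.1 x.2 s)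
      = pol s a * (γ * ∑ x : S × A, d x.1 x.2 * P x.1 x.2 s) by
    rw [Finset.mul_sum, Finset.mul_sum]
    exact Finset.sum_congr rfl fun x _ => by ring]
  ring

end AuxOcc

section AuxVal

variable {S A : Type*} [Fintype S] [Fintype A]

lemma value_bounds [Nonempty S] (P : S → A → S → ℝ) (pol : S → A → ℝ)
    (r : S → A → ℝ) (Rmax : ℝ) {γ : ℝ} (V : S → ℝ)
    (hP : IsKernel P) (hpol : IsPolicy pol)
    (hr : ∀ s a, 0 ≤ r s a ∧ r s a ≤ Rmax) (hγ0 : 0 < γ) (hγ1 : γ < 1)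
    (hV : IsValue P pol r γ V) :
    ∀ s, 0 ≤ V s ∧ V s ≤ Rmax / (1 - γ) := by
  have h1γ : 0 < 1 - γ := by linarith
  obtain ⟨smax, -, hmax⟩ := Finset.exists_max_image Finset.univ V Finset.univ_nonempty
  obtain ⟨smin, -, hmin⟩ := Finset.exists_min_image Finset.univ V Finset.univ_nonempty
  have hmax' : ∀ s, V s ≤ V smax := fun s => hmax s (Finset.mem_univ s)
  have hmin' : ∀ s, V smin ≤ V s := fun s => hmin s (Finset.mem_univ s)
  have hub : V smax ≤ Rmax / (1 - γ) := by
    have h : V smax ≤ Rmax + γ * V smax := by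
      calc V smax = ∑ a, pol smax a * (r smax a + γ * ∑ s', P smax a s' * V s') :=
            hV smax
        _ ≤ ∑ a, pol smax a * (Rmax + γ * V smax) := by
            refine Finset.sum_le_sum fun a _ => ?_
            refine mul_le_mul_of_nonneg_left ?_ ((hpol smax).1 a)
            have hinner : ∑ s', P smax a s' * V s' ≤ V smax := by
              calc ∑ s', P smax a s' * V s' ≤ ∑ s', P smax a s' * V smax :=
                    Finset.sum_le_sum fun s' _ =>
                      mul_le_mul_of_nonneg_left (hmax' s') ((hP smax a).1 s')
                _ = V smax := by rw [← Finset.sum_mul, (hP smax a).2, one_mul]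
            have := (hr smax a).2
            nlinarith
        _ = Rmax + γ * V smax := by rw [← Finset.sum_mul, (hpol smax).2, one_mul]
    rw [le_div_iff₀ h1γ]
    nlinarith
  have hlb : 0 ≤ V smin := by
    have h : γ * V smin ≤ V smin := by
      calc γ * V smin = ∑ a, pol smin a * (0 + γ * V smin) := by
            rw [← Finset.sum_mul, (hpol smin).2]; ring
        _ ≤ ∑ a, pol smin a * (r smin a + γ * ∑ s', P smin a s' * V s') := by
            refine Finset.sum_le_sum fun a _ => ?_
            refine mul_le_mul_of_nonneg_left ?_ ((hpol smin).1 a)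
            have hinner : V smin ≤ ∑ s', P smin a s' * V s' := by
              calc V smin = ∑ s', P smin a s' * V smin := by
                    rw [← Finset.sum_mul, (hP smin a).2, one_mul]
                _ ≤ ∑ s', P smin a s' * V s' :=
                    Finset.sum_le_sum fun s' _ =>
                      mul_le_mul_of_nonneg_left (hmin' s') ((hP smin a).1 s')
            have := (hr smin a).1
            nlinarith
        _ = V smin := (hV smin).symm
    nlinarith
  exact fun s => ⟨le_trans hlb (hmin' s), le_trans (hmax' s) hub⟩

lemma occ_identity (P Phat : S → A → S → ℝ) (pol : S → A → ℝ) (hpol : IsPolicy pol)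
    (r : S → A → ℝ) (γ : ℝ) (ρ₀ : S → ℝ)
    (V Vhat : S → ℝ) (hV : IsValue P pol r γ V) (hVhat : IsValue Phat pol r γ Vhat)
    (d : S → A → ℝ) (hd : IsOcc P pol ρ₀ γ d) :
    (∑ s, ρ₀ s * V s) - (∑ s, ρ₀ s * Vhat s)
      = γ * ∑ x : S × A, d x.1 x.2 *
          (∑ s', (P x.1 x.2 s' - Phat x.1 x.2 s') * Vhat s') := by
  classical
  set Δ : S → ℝ := fun s => V s - Vhat s with hΔdef
  set E : S → A → ℝ := fun s a => ∑ s', (P s a s' - Phat s a s') * Vhat s' with hEdef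
  set PΔ : S → A → ℝ := fun s a => ∑ s', P s a s' * Δ s' with hPΔdef
  set m : S → ℝ := fun s => ρ₀ s + γ * ∑ x : S × A, d x.1 x.2 * P x.1 x.2 s with hmdef
  set F : S → ℝ := fun s => ∑ a, pol s a * E s a with hFdef
  set G : S → ℝ := fun s => ∑ a, pol s a * PΔ s a with hGdef
  have hdm : ∀ s a, d s a = pol s a * m s := fun s a => hd s a
  have hXY : ∀ s a, (∑ s', P s a s' * V s') - (∑ s', Phat s a s' * Vhat s')
      = E s a + PΔ s a := by
    intro s a
    simp only [hEdef, hPΔdef, hΔdef]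
    rw [← Finset.sum_sub_distrib, ← Finset.sum_add_distrib]
    exact Finset.sum_congr rfl fun s' _ => by ring
  have hDelta : ∀ s, Δ s = γ * (F s + G s) := by
    intro s
    have h1 : Δ s = ∑ a, (pol s a * (r s a + γ * ∑ s', P s a s' * V s')
        - pol s a * (r s a + γ * ∑ s', Phat s a s' * Vhat s')) := by
      simp only [hΔdef]
      rw [hV s, hVhat s, Finset.sum_sub_distrib]
    rw [h1, hFdef, hGdef]
    simp only
    rw [← Finset.sum_add_distrib, Finset.mul_sum]
    refine Finset.sum_congr rfl fun a _ => ?_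
    linear_combination (γ * pol s a) * hXY s a
  have hfac : ∀ (H : S → A → ℝ), ∑ x : S × A, d x.1 x.2 * H x.1 x.2
      = ∑ s, m s * ∑ a, pol s a * H s a := by
    intro H
    rw [Fintype.sum_prod_type]
    refine Finset.sum_congr rfl fun s _ => ?_
    rw [Finset.mul_sum]
    exact Finset.sum_congr rfl fun a _ => by rw [hdm s a]; ring
  have hsum_dE : ∑ x : S × A, d x.1 x.2 * E x.1 x.2 = ∑ s, m s * F s := by
    rw [hfac E, hFdef]
  have hsum_dPΔ : ∑ x : S × A, d x.1 x.2 * PΔ x.1 x.2 = ∑ s, m s * G s := by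
    rw [hfac PΔ, hGdef]
  have hswap : ∑ s, (γ * ∑ x : S × A, d x.1 x.2 * P x.1 x.2 s) * Δ s
      = γ * ∑ x : S × A, d x.1 x.2 * PΔ x.1 x.2 := by
    have hL : ∀ s, (γ * ∑ x : S × A, d x.1 x.2 * P x.1 x.2 s) * Δ s
        = ∑ x : S × A, γ * (d x.1 x.2 * (P x.1 x.2 s * Δ s)) := by
      intro s
      rw [Finset.mul_sum, Finset.sum_mul]
      exact Finset.sum_congr rfl fun x _ => by ring
    have hR : ∀ x : S × A, γ * (d x.1 x.2 * PΔ x.1 x.2)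
        = ∑ s, γ * (d x.1 x.2 * (P x.1 x.2 s * Δ s)) := by
      intro x
      simp only [hPΔdef]
      rw [Finset.mul_sum, Finset.mul_sum]
    rw [Finset.sum_congr rfl fun s _ => hL s, Finset.mul_sum,
      Finset.sum_congr rfl fun x (_ : x ∈ Finset.univ) => hR x]
    exact Finset.sum_comm
  have hWayB : ∑ s, m s * Δ s = (∑ s, ρ₀ s * Δ s) + γ * ∑ s, m s * G s := by
    rw [← hsum_dPΔ, ← hswap, ← Finset.sum_add_distrib]
    simp only [hmdef]
    exact Finset.sum_congr rfl fun s _ => by ring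
  have hWayA : ∑ s, m s * Δ s = γ * (∑ s, m s * F s) + γ * (∑ s, m s * G s) := by
    calc ∑ s, m s * Δ s = ∑ s, m s * (γ * (F s + G s)) :=
          Finset.sum_congr rfl fun s _ => by rw [hDelta s]
      _ = γ * (∑ s, m s * F s) + γ * (∑ s, m s * G s) := by
          rw [Finset.mul_sum, Finset.mul_sum, ← Finset.sum_add_distrib]
          exact Finset.sum_congr rfl fun s _ => by ring
  have hkey : ∑ s, ρ₀ s * Δ s = γ * ∑ s, m s * F s := by linarith
  have hgoalL : (∑ s, ρ₀ s * V s) - ∑ s, ρ₀ s * Vhat s = ∑ s, ρ₀ s * Δ s := by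
    rw [← Finset.sum_sub_distrib]
    exact Finset.sum_congr rfl fun s _ => by simp only [hΔdef]; ring
  rw [hgoalL, hkey, ← hsum_dE]

end AuxVal

/-- **TV coverage guarantee.** Under κ-coverage, the value gap of every policy in `Pol`
is bounded by the `ddata`-weighted one-step total-variation error. -/
theorem tv_coverage_guarantee
    {S A : Type*} [Fintype S] [Fintype A] [Nonempty S] [Nonempty A]
    (P Phat : S → A → S → ℝ) (hP : IsKernel P) (hPhat : IsKernel Phat)
    (r : S → A → ℝ) (Rmax : ℝ) (hr : ∀ s a, 0 ≤ r s a ∧ r s a ≤ Rmax)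
    (γ : ℝ) (hγ0 : 0 < γ) (hγ1 : γ < 1)
    (ρ₀ : S → ℝ) (hρ : IsPMF ρ₀)
    (Pol : Set (S → A → ℝ)) (hPolNe : Pol.Nonempty) (hPol : ∀ p ∈ Pol, IsPolicy p)
    (ddata : S → A → ℝ) (hdata : IsPMF (fun x : S × A => ddata x.1 x.2))
    (κ : ℝ) (hκ : 0 < κ)
    (hcov : KappaCoverage P ρ₀ γ Pol ddata κ) :
    ∀ p ∈ Pol, ∀ V Vhat : S → ℝ, IsValue P p r γ V → IsValue Phat p r γ Vhat →
      |(∑ s, ρ₀ s * V s) - ∑ s, ρ₀ s * Vhat s| ≤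
        γ * Rmax / (1 - γ) * κ *
          ∑ x : S × A, ddata x.1 x.2 * tvDist (P x.1 x.2) (Phat x.1 x.2) := by
  intro p hp V Vhat hV hVhat
  have hpol := hPol p hp
  have h1γ : 0 < 1 - γ := by linarith
  have hRmax : 0 ≤ Rmax :=
    le_trans (hr (Classical.arbitrary S) (Classical.arbitrary A)).1
      (hr (Classical.arbitrary S) (Classical.arbitrary A)).2
  obtain ⟨d, hd, hdpos⟩ := exists_occ P p ρ₀ hP hpol hρ hγ0.le hγ1
  rw [occ_identity P Phat p hpol r γ ρ₀ V Vhat hV hVhat d hd]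
  have hVb := value_bounds Phat p r Rmax Vhat hPhat hpol hr hγ0 hγ1 hVhat
  have h2c : Rmax / (1 - γ) = 2 * (Rmax / (2 * (1 - γ))) := by
    field_simp
  have hE : ∀ s a, |∑ s', (P s a s' - Phat s a s') * Vhat s'|
      ≤ Rmax / (1 - γ) * tvDist (P s a) (Phat s a) := by
    intro s a
    set c : ℝ := Rmax / (2 * (1 - γ)) with hcdef
    have hc : 0 ≤ c := div_nonneg hRmax (by linarith)
    have hzero : ∑ s', (P s a s' - Phat s a s') = 0 := by
      rw [Finset.sum_sub_distrib, (hP s a).2, (hPhat s a).2]; ring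
    have hshift : ∑ s', (P s a s' - Phat s a s') * Vhat s'
        = ∑ s', (P s a s' - Phat s a s') * (Vhat s' - c) := by
      simp only [mul_sub, Finset.sum_sub_distrib]
      rw [← Finset.sum_mul, hzero]; ring
    rw [hshift]
    calc |∑ s', (P s a s' - Phat s a s') * (Vhat s' - c)|
        ≤ ∑ s', |(P s a s' - Phat s a s') * (Vhat s' - c)| :=
          Finset.abs_sum_le_sum_abs _ _
      _ ≤ ∑ s', |P s a s' - Phat s a s'| * c := by
          refine Finset.sum_le_sum fun s' _ => ?_
          rw [abs_mul]
          refine mul_le_mul_of_nonneg_left ?_ (abs_nonneg _)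
          rw [abs_le]
          have h1 := (hVb s').1
          have h2 := (hVb s').2
          constructor <;> [linarith; (rw [h2c] at h2; linarith)]
      _ = Rmax / (1 - γ) * tvDist (P s a) (Phat s a) := by
          rw [← Finset.sum_mul, tvDist, h2c]; ring
  rw [abs_mul, abs_of_pos hγ0]
  calc γ * |∑ x : S × A, d x.1 x.2 * ∑ s', (P x.1 x.2 s' - Phat x.1 x.2 s') * Vhat s'|
      ≤ γ * ∑ x : S × A, κ * ddata x.1 x.2 *
          (Rmax / (1 - γ) * tvDist (P x.1 x.2) (Phat x.1 x.2)) := by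
        refine mul_le_mul_of_nonneg_left ?_ hγ0.le
        calc |∑ x : S × A, d x.1 x.2 * ∑ s', (P x.1 x.2 s' - Phat x.1 x.2 s') * Vhat s'|
            ≤ ∑ x : S × A,
                |d x.1 x.2 * ∑ s', (P x.1 x.2 s' - Phat x.1 x.2 s') * Vhat s'| :=
              Finset.abs_sum_le_sum_abs _ _
          _ ≤ ∑ x : S × A, κ * ddata x.1 x.2 *
                (Rmax / (1 - γ) * tvDist (P x.1 x.2) (Phat x.1 x.2)) := by
              refine Finset.sum_le_sum fun x _ => ?_
              rw [abs_mul, abs_of_nonneg (hdpos x.1 x.2)]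
              exact mul_le_mul (hcov p hp d hd x.1 x.2) (hE x.1 x.2) (abs_nonneg _)
                (mul_nonneg hκ.le (hdata.1 x))
    _ = γ * Rmax / (1 - γ) * κ *
          ∑ x : S × A, ddata x.1 x.2 * tvDist (P x.1 x.2) (Phat x.1 x.2) := by
        rw [Finset.mul_sum, Finset.mul_sum]
        exact Finset.sum_congr rfl fun x _ => by ring
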